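/- Suppose g⁺ ∈ B_b(X̄₊) decays exponentially fast to zero. Then for any ℓ⁺, ℓ⁻ ≥ 0 the series ∑_{n=1}^∞ (J⁻ 𝒫⁻_{ℓ⁻+ℓ⁺} J⁺ 𝒫⁺_{ℓ⁻+ℓ⁺})ⁿ g⁺ converges in the supremum norm (i.e. the partial sums form a Cauchy sequence in sup norm on X̄₊). Analogously, if g⁻ ∈ B_b(X̄₋) decays exponentially fast to zero, then for any ℓ⁺, ℓ⁻ ≥ 0 the series ∑_{n=1}^∞ (J⁺ 𝒫⁺_{ℓ⁻+ℓ⁺} J⁻ 𝒫⁻_{ℓ⁻+ℓ⁺})ⁿ g⁻ converges in the supremum norm. -/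

import Mathlib

open MeasureTheory Set Filter
open scoped ENNReal

noncomputable section

/-- The extended state space `Ē = E ∪ {∂}`, with `none` playing the role of the coffin state. -/
instance optionMeasurableSpace {E : Type*} : MeasurableSpace (Option E) := ⊤

/-- The canonical path space: `Ē`-valued functions of time. -/
abbrev CPath (E : Type*) := ℝ → Option E

/-- The state of the path at an extended time, with `X_∞ := ∂`. -/
def Xat {E : Type*} (t : ℝ≥0∞) (ω : CPath E) : Option E :=
  if t = ∞ then none else ω t.toReal

/-- The additive functional `φ_t(s) = ∫_s^t v(X_u) du`. -/
def phi {E : Type*} (v : Option E → ℝ) (s t : ℝ) (ω : CPath E) : ℝ :=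
  ∫ u in s..t, v (ω u)

/-- The first passage time `τ_ℓ⁺(s) = inf {t ∈ [s,∞] : φ_t(s) > ℓ}` (with `inf ∅ = ∞`). -/
def tauP {E : Type*} (v : Option E → ℝ) (s ℓ : ℝ) (ω : CPath E) : ℝ≥0∞ :=
  sInf {t : ℝ≥0∞ | ∃ u : ℝ, s ≤ u ∧ t = ENNReal.ofReal u ∧ ℓ < phi v s u ω}

/-- The first passage time `τ_ℓ⁻(s) = inf {t ∈ [s,∞] : φ_t(s) < -ℓ}` (with `inf ∅ = ∞`). -/
def tauM {E : Type*} (v : Option E → ℝ) (s ℓ : ℝ) (ω : CPath E) : ℝ≥0∞ :=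
  sInf {t : ℝ≥0∞ | ∃ u : ℝ, s ≤ u ∧ t = ENNReal.ofReal u ∧ phi v s u ω < -ℓ}

/-- `ξ⁺_{ℓ⁻,ℓ⁺}(s)`: equals `τ_{ℓ⁺}⁺(s)` if it is strictly smaller than `τ_{ℓ⁻}⁻(s)`, else `∞`. -/
def xiP {E : Type*} (v : Option E → ℝ) (ℓm ℓp s : ℝ) (ω : CPath E) : ℝ≥0∞ :=
  if tauP v s ℓp ω < tauM v s ℓm ω then tauP v s ℓp ω else ∞

/-- `ξ⁻_{ℓ⁻,ℓ⁺}(s)`: equals `τ_{ℓ⁻}⁻(s)` if it is strictly smaller than `τ_{ℓ⁺}⁺(s)`, else `∞`. -/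
def xiM {E : Type*} (v : Option E → ℝ) (ℓm ℓp s : ℝ) (ω : CPath E) : ℝ≥0∞ :=
  if tauM v s ℓm ω < tauP v s ℓp ω then tauM v s ℓm ω else ∞

/-- Membership in `B_b(X̄₊)`: bounded measurable functions on
`X̄₊ = (ℝ₊ × E₊) ∪ {(∞,∂)}` vanishing at `(∞,∂)`, encoded as functions on
`[0,∞] × Ē` vanishing off `ℝ₊ × E₊` (in particular at `(∞,∂)`). -/
def MemBbP {E : Type*} (v : Option E → ℝ) (g : ℝ≥0∞ → Option E → ℝ) : Prop :=
  (∀ j, Measurable fun t => g t j) ∧ (∃ C, ∀ t j, |g t j| ≤ C) ∧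
    (∀ t, g t none = 0) ∧
    (∀ (t : ℝ≥0∞) (e : E), ¬(0 < v (some e) ∧ t ≠ ∞) → g t (some e) = 0)

/-- Membership in `B_b(X̄₋)`. -/
def MemBbM {E : Type*} (v : Option E → ℝ) (g : ℝ≥0∞ → Option E → ℝ) : Prop :=
  (∀ j, Measurable fun t => g t j) ∧ (∃ C, ∀ t j, |g t j| ≤ C) ∧
    (∀ t, g t none = 0) ∧
    (∀ (t : ℝ≥0∞) (e : E), ¬(v (some e) < 0 ∧ t ≠ ∞) → g t (some e) = 0)

/-- `g` decays exponentially fast to zero: `|g(s,i)| ≤ C e^{-c s}` for some `C, c > 0`. -/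
def DecaysExp {E : Type*} (g : ℝ≥0∞ → Option E → ℝ) : Prop :=
  ∃ C c : ℝ, 0 < C ∧ 0 < c ∧
    ∀ (t : ℝ≥0∞) (j : Option E), t ≠ ∞ → |g t j| ≤ C * Real.exp (-c * t.toReal)

/-- Generic expectation operator `(s,i) ↦ 𝔼_{s,i}[g(σ(s), X_{σ(s)})]` associated with a family of
random times `σ(s)`, as an operator on functions of `(t,j) ∈ [0,∞] × Ē` (value `0` at `t = ∞`). -/
def applyAt {E : Type*} (P : ℝ → Option E → Measure (CPath E)) (σ : ℝ → CPath E → ℝ≥0∞)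
    (g : ℝ≥0∞ → Option E → ℝ) : ℝ≥0∞ → Option E → ℝ :=
  fun t j =>
    if t = ∞ then 0
    else ∫ ω, g (σ t.toReal ω) (Xat (σ t.toReal ω) ω) ∂ P t.toReal j

/-- Restriction of a function on `[0,∞] × Ē` to `X̄₊` (zero off `ℝ₊ × E₊`). -/
def restrP {E : Type*} (v : Option E → ℝ) (g : ℝ≥0∞ → Option E → ℝ) :
    ℝ≥0∞ → Option E → ℝ :=
  fun t j =>
    match j with
    | none => 0
    | some e => if 0 < v (some e) ∧ t ≠ ∞ then g t (some e) else 0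

/-- Restriction of a function on `[0,∞] × Ē` to `X̄₋` (zero off `ℝ₊ × E₋`). -/
def restrM {E : Type*} (v : Option E → ℝ) (g : ℝ≥0∞ → Option E → ℝ) :
    ℝ≥0∞ → Option E → ℝ :=
  fun t j =>
    match j with
    | none => 0
    | some e => if v (some e) < 0 ∧ t ≠ ∞ then g t (some e) else 0

/-- The operator `𝒫_ℓ⁺ : B_b(X̄₊) → B_b(X̄₊)`, `(𝒫_ℓ⁺ g)(s,i) = 𝔼_{s,i}[g(τ_ℓ⁺(s), X_{τ_ℓ⁺(s)})]`. -/
def opP {E : Type*} (P : ℝ → Option E → Measure (CPath E)) (v : Option E → ℝ) (ℓ : ℝ)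
    (g : ℝ≥0∞ → Option E → ℝ) : ℝ≥0∞ → Option E → ℝ :=
  restrP v (applyAt P (fun s => tauP v s ℓ) g)

/-- The operator `J⁺ : B_b(X̄₊) → B_b(X̄₋)`, `(J⁺ g)(s,i) = 𝔼_{s,i}[g(τ₀⁺(s), X_{τ₀⁺(s)})]`. -/
def opJP {E : Type*} (P : ℝ → Option E → Measure (CPath E)) (v : Option E → ℝ)
    (g : ℝ≥0∞ → Option E → ℝ) : ℝ≥0∞ → Option E → ℝ :=
  restrM v (applyAt P (fun s => tauP v s 0) g)

/-- The operator `𝒫_ℓ⁻ : B_b(X̄₋) → B_b(X̄₋)`. -/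
def opM {E : Type*} (P : ℝ → Option E → Measure (CPath E)) (v : Option E → ℝ) (ℓ : ℝ)
    (g : ℝ≥0∞ → Option E → ℝ) : ℝ≥0∞ → Option E → ℝ :=
  restrM v (applyAt P (fun s => tauM v s ℓ) g)

/-- The operator `J⁻ : B_b(X̄₋) → B_b(X̄₊)`. -/
def opJM {E : Type*} (P : ℝ → Option E → Measure (CPath E)) (v : Option E → ℝ)
    (g : ℝ≥0∞ → Option E → ℝ) : ℝ≥0∞ → Option E → ℝ :=
  restrP v (applyAt P (fun s => tauM v s 0) g)

/-- The operator `Ξ⁺_{ℓ⁻,ℓ⁺}`, `(Ξ⁺ g)(s,i) = 𝔼_{s,i}[g(ξ⁺_{ℓ⁻,ℓ⁺}(s), X_{ξ⁺_{ℓ⁻,ℓ⁺}(s)})]`. -/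
def opXiP {E : Type*} (P : ℝ → Option E → Measure (CPath E)) (v : Option E → ℝ) (ℓm ℓp : ℝ)
    (g : ℝ≥0∞ → Option E → ℝ) (s : ℝ) (j : Option E) : ℝ :=
  ∫ ω, g (xiP v ℓm ℓp s ω) (Xat (xiP v ℓm ℓp s ω) ω) ∂ P s j

/-- The operator `Ξ⁻_{ℓ⁻,ℓ⁺}`. -/
def opXiM {E : Type*} (P : ℝ → Option E → Measure (CPath E)) (v : Option E → ℝ) (ℓm ℓp : ℝ)
    (g : ℝ≥0∞ → Option E → ℝ) (s : ℝ) (j : Option E) : ℝ :=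
  ∫ ω, g (xiM v ℓm ℓp s ω) (Xat (xiM v ℓm ℓp s ω) ω) ∂ P s j

/-- The raw σ-field `σ(X_u, u ∈ [s,r])` on path space. -/
def natF {E : Type*} (s r : ℝ) : MeasurableSpace (CPath E) :=
  ⨆ u ∈ Set.Icc s r, MeasurableSpace.comap (fun ω : CPath E => ω u) ⊤

/-- The right-continuous filtration `F^s_t = ⋂_{r > t} σ(X_u, u ∈ [s,r])`,
indexed by extended times, with `F^s_∞ = σ(X_u, u ≥ s)`. -/
def Fst {E : Type*} (s : ℝ) (t : ℝ≥0∞) : MeasurableSpace (CPath E) :=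
  if t = ∞ then ⨆ u ∈ Set.Ici s, MeasurableSpace.comap (fun ω : CPath E => ω u) ⊤
  else ⨅ r ∈ Set.Ioi t.toReal, natF s r

/-- `τ` is an `𝔽ₛ`-stopping time. -/
def IsST {E : Type*} (s : ℝ) (τ : CPath E → ℝ≥0∞) : Prop :=
  ∀ t : ℝ≥0∞, MeasurableSet[Fst s t] {ω | τ ω ≤ t}

/-- The σ-field `F^s_τ` at an `𝔽ₛ`-stopping time `τ`. -/
def stoppedSigma {E : Type*} (s : ℝ) (τ : CPath E → ℝ≥0∞) (hτ : IsST s τ) :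
    MeasurableSpace (CPath E) where
  MeasurableSet' A := ∀ t : ℝ≥0∞, MeasurableSet[Fst s t] (A ∩ {ω | τ ω ≤ t})
  measurableSet_empty := fun t => by
    simpa using (MeasurableSet.empty : MeasurableSet[Fst s t] (∅ : Set (CPath E)))
  measurableSet_compl := fun A hA t => by
    have h1 : Aᶜ ∩ {ω | τ ω ≤ t} = {ω | τ ω ≤ t} \ (A ∩ {ω | τ ω ≤ t}) := by
      ext ω
      simp only [Set.mem_inter_iff, Set.mem_compl_iff, Set.mem_diff, Set.mem_setOf_eq]
      tauto
    rw [h1]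
    exact MeasurableSet.diff (hτ t) (hA t)
  measurableSet_iUnion := fun f hf t => by
    rw [Set.iUnion_inter]
    exact MeasurableSet.iUnion fun n => hf n t

/-- A canonical time-inhomogeneous Markov family on `Ē`, with right-continuous sample paths,
absorbing coffin state, initial condition `ℙ_{s,i}(X_s = i) = 1` and the strong Markov property
with respect to the right-continuous filtrations `𝔽ₛ`. -/
structure MarkovFamily (E : Type*) (v : Option E → ℝ) where
  /-- The family of probability measures `ℙ_{s,i}` on canonical path space. -/
  P : ℝ → Option E → Measure (CPath E)
  prob : ∀ s j, IsProbabilityMeasure (P s j)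
  init : ∀ (s : ℝ) (j : Option E), 0 ≤ s → P s j {ω | ω s = j} = 1
  pathReg : ∀ (s : ℝ) (j : Option E), 0 ≤ s → ∀ᵐ ω ∂ P s j,
    (∀ t, s ≤ t → ∃ ε > 0, ∀ u ∈ Set.Ico t (t + ε), ω u = ω t) ∧
    (∀ t, s ≤ t → ω t = none → ∀ u, t ≤ u → ω u = none)
  strongMarkov : ∀ (s : ℝ) (j : Option E), 0 ≤ s →
    ∀ (τ : CPath E → ℝ≥0∞) (hτ : IsST s τ), (∀ ω, ENNReal.ofReal s ≤ τ ω) →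
    ∀ G : ℝ≥0∞ → CPath E → ℝ, Measurable (Function.uncurry G) →
      (∃ C, ∀ t ω, |G t ω| ≤ C) →
      (∀ (t : ℝ) (ω ω' : CPath E), (∀ u, t ≤ u → ω u = ω' u) →
        G (ENNReal.ofReal t) ω = G (ENNReal.ofReal t) ω') →
      (P s j)[fun ω => Set.indicator {ω' : CPath E | τ ω' ≠ ∞}
          (fun ω' => G (τ ω') ω') ω | stoppedSigma s τ hτ]
        =ᵐ[P s j]
      fun ω => Set.indicator {ω' : CPath E | τ ω' ≠ ∞}
          (fun ω' => ∫ ω'', G (τ ω') ω'' ∂ P (τ ω').toReal (ω' (τ ω').toReal)) ω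

/-- The first jump time `γ(s) = inf {t ≥ s : X_t ≠ X_s}`. -/
def gammaJump {E : Type*} (s : ℝ) (ω : CPath E) : ℝ≥0∞ :=
  sInf {t : ℝ≥0∞ | ∃ u : ℝ, s ≤ u ∧ t = ENNReal.ofReal u ∧ ω u ≠ ω s}

/-- Assumption on the sub-Markovian generator matrices `(Λ_s)`: entries uniformly bounded by `K`,
nonnegative off-diagonal entries, nonpositive row sums, and the law of the first jump time is
`ℙ_{s,i}(γ(s) ≤ T) = 1 - exp(∫_s^T Λ_u(i,i) du)`. -/
structure GenAssumption (E : Type*) [Fintype E] (v : Option E → ℝ)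
    (M : MarkovFamily E v) (K : ℝ) where
  hK : 0 < K
  Lam : ℝ → E → E → ℝ
  bdd : ∀ s i j, |Lam s i j| ≤ K
  offDiag : ∀ s i j, i ≠ j → 0 ≤ Lam s i j
  rowSum : ∀ s i, ∑ j, Lam s i j ≤ 0
  jumpLaw : ∀ (s T : ℝ) (i : E), 0 ≤ s → s ≤ T →
    (M.P s (some i) {ω | gammaJump s ω ≤ ENNReal.ofReal T}).toReal
      = 1 - Real.exp (∫ u in s..T, Lam u i i)

end

/-- The composite operator `J⁻ 𝒫⁻_ℓ J⁺ 𝒫⁺_ℓ : B_b(X̄₊) → B_b(X̄₊)`. -/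
noncomputable def opAplus {E : Type*} (P : ℝ → Option E → Measure (CPath E)) (v : Option E → ℝ) (ℓ : ℝ) :
    (ℝ≥0∞ → Option E → ℝ) → (ℝ≥0∞ → Option E → ℝ) :=
  fun h => opJM P v (opM P v ℓ (opJP P v (opP P v ℓ h)))

/-- The composite operator `J⁺ 𝒫⁺_ℓ J⁻ 𝒫⁻_ℓ : B_b(X̄₋) → B_b(X̄₋)`. -/
noncomputable def opAminus {E : Type*} (P : ℝ → Option E → Measure (CPath E)) (v : Option E → ℝ) (ℓ : ℝ) :
    (ℝ≥0∞ → Option E → ℝ) → (ℝ≥0∞ → Option E → ℝ) :=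
  fun h => opJP P v (opP P v ℓ (opJM P v (opM P v ℓ h)))

section NeumannAux

lemma nsc_abs_integral_le {α : Type*} [MeasurableSpace α] (μ : Measure α)
    [IsProbabilityMeasure μ] (f : α → ℝ) (B : ℝ) (hf : ∀ ω, |f ω| ≤ B) :
    |∫ ω, f ω ∂μ| ≤ B := by
  have := norm_integral_le_of_norm_le_const (μ := μ) (f := f) (C := B)
    (Filter.Eventually.of_forall fun ω => by simpa [Real.norm_eq_abs] using hf ω)
  simpa [Real.norm_eq_abs, measure_univ] using this

lemma nsc_tauP_ge {E : Type*} (v : Option E → ℝ) (s ℓ : ℝ) (ω : CPath E) :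
    ENNReal.ofReal s ≤ tauP v s ℓ ω :=
  le_sInf fun x hx => by
    obtain ⟨u, hu, rfl, -⟩ := hx; exact ENNReal.ofReal_le_ofReal hu

lemma nsc_tauM_ge {E : Type*} (v : Option E → ℝ) (s ℓ : ℝ) (ω : CPath E) :
    ENNReal.ofReal s ≤ tauM v s ℓ ω :=
  le_sInf fun x hx => by
    obtain ⟨u, hu, rfl, -⟩ := hx; exact ENNReal.ofReal_le_ofReal hu

lemma nsc_Xat_inf {E : Type*} (ω : CPath E) : Xat ∞ ω = none := if_pos rfl

lemma nsc_gamma_le_tauM {E : Type*} (v : Option E → ℝ) (s : ℝ) (i : E)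
    (hvi : 0 ≤ v (some i)) (ω : CPath E) (hω : ω s = some i) :
    gammaJump s ω ≤ tauM v s 0 ω := by
  refine le_sInf fun x hx => ?_
  obtain ⟨u, hsu, rfl, hphi⟩ := hx
  by_contra hlt
  push_neg at hlt
  have hconst : Set.EqOn (fun u' => v (ω u')) (fun _ => v (some i)) (Set.uIcc s u) := by
    intro u' hu'
    rw [Set.uIcc_of_le hsu] at hu'
    have hcc : ω u' = ω s := by
      by_contra hne
      have h1 : gammaJump s ω ≤ ENNReal.ofReal u' := sInf_le ⟨u', hu'.1, rfl, hne⟩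
      exact absurd (h1.trans (ENNReal.ofReal_le_ofReal hu'.2)) (not_le.mpr hlt)
    show v (ω u') = v (some i)
    rw [hcc, hω]
  have hval : phi v s u ω = (u - s) * v (some i) := by
    unfold phi
    rw [intervalIntegral.integral_congr hconst, intervalIntegral.integral_const, smul_eq_mul]
  rw [hval, neg_zero] at hphi
  nlinarith [mul_nonneg (sub_nonneg.mpr hsu) hvi]

lemma nsc_gamma_le_tauP {E : Type*} (v : Option E → ℝ) (s : ℝ) (i : E)
    (hvi : v (some i) ≤ 0) (ω : CPath E) (hω : ω s = some i) :
    gammaJump s ω ≤ tauP v s 0 ω := by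
  refine le_sInf fun x hx => ?_
  obtain ⟨u, hsu, rfl, hphi⟩ := hx
  by_contra hlt
  push_neg at hlt
  have hconst : Set.EqOn (fun u' => v (ω u')) (fun _ => v (some i)) (Set.uIcc s u) := by
    intro u' hu'
    rw [Set.uIcc_of_le hsu] at hu'
    have hcc : ω u' = ω s := by
      by_contra hne
      have h1 : gammaJump s ω ≤ ENNReal.ofReal u' := sInf_le ⟨u', hu'.1, rfl, hne⟩
      exact absurd (h1.trans (ENNReal.ofReal_le_ofReal hu'.2)) (not_le.mpr hlt)
    show v (ω u') = v (some i)
    rw [hcc, hω]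
  have hval : phi v s u ω = (u - s) * v (some i) := by
    unfold phi
    rw [intervalIntegral.integral_congr hconst, intervalIntegral.integral_const, smul_eq_mul]
  rw [hval] at hphi
  nlinarith [mul_nonpos_of_nonneg_of_nonpos (sub_nonneg.mpr hsu) hvi]

lemma nsc_applyAt_inf {E : Type*} (P : ℝ → Option E → Measure (CPath E))
    (σ : ℝ → CPath E → ℝ≥0∞) (h : ℝ≥0∞ → Option E → ℝ) (j : Option E) :
    applyAt P σ h ∞ j = 0 := if_pos rfl

lemma nsc_restrP_inf {E : Type*} (v : Option E → ℝ) (f : ℝ≥0∞ → Option E → ℝ)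
    (j : Option E) : restrP v f ∞ j = 0 := by
  cases j with
  | none => rfl
  | some e => simp [restrP]

lemma nsc_restrM_inf {E : Type*} (v : Option E → ℝ) (f : ℝ≥0∞ → Option E → ℝ)
    (j : Option E) : restrM v f ∞ j = 0 := by
  cases j with
  | none => rfl
  | some e => simp [restrM]

lemma nsc_restrP_bound {E : Type*} (v : Option E → ℝ) (f : ℝ≥0∞ → Option E → ℝ)
    (t : ℝ≥0∞) (j : Option E) (B : ℝ) (hB : 0 ≤ B)
    (hf : ∀ e : E, 0 < v (some e) → t ≠ ∞ → |f t (some e)| ≤ B) :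
    |restrP v f t j| ≤ B := by
  cases j with
  | none => simpa [restrP] using hB
  | some e =>
    by_cases hcond : 0 < v (some e) ∧ t ≠ ∞
    · simpa [restrP, hcond] using hf e hcond.1 hcond.2
    · simp only [restrP, if_neg hcond]
      simpa using hB

lemma nsc_restrM_bound {E : Type*} (v : Option E → ℝ) (f : ℝ≥0∞ → Option E → ℝ)
    (t : ℝ≥0∞) (j : Option E) (B : ℝ) (hB : 0 ≤ B)
    (hf : ∀ e : E, v (some e) < 0 → t ≠ ∞ → |f t (some e)| ≤ B) :
    |restrM v f t j| ≤ B := by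
  cases j with
  | none => simpa [restrM] using hB
  | some e =>
    by_cases hcond : v (some e) < 0 ∧ t ≠ ∞
    · simpa [restrM, hcond] using hf e hcond.1 hcond.2
    · simp only [restrM, if_neg hcond]
      simpa using hB

lemma nsc_applyAt_bound {E : Type*} (P : ℝ → Option E → Measure (CPath E))
    (hP : ∀ s j, IsProbabilityMeasure (P s j))
    (σ : ℝ → CPath E → ℝ≥0∞) (hσ : ∀ s ω, 0 ≤ s → ENNReal.ofReal s ≤ σ s ω)
    (h : ℝ≥0∞ → Option E → ℝ) (D c : ℝ) (hD : 0 ≤ D) (hc : 0 ≤ c)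
    (hbd : ∀ t j, t ≠ ∞ → |h t j| ≤ D * Real.exp (-c * t.toReal))
    (hinf : ∀ j, h ∞ j = 0) :
    ∀ (t : ℝ≥0∞) (j : Option E), t ≠ ∞ →
      |applyAt P σ h t j| ≤ D * Real.exp (-c * t.toReal) := by
  intro t j ht
  unfold applyAt
  rw [if_neg ht]
  haveI := hP t.toReal j
  refine nsc_abs_integral_le _ _ _ fun ω => ?_
  by_cases hσω : σ t.toReal ω = ∞
  · rw [hσω, hinf]
    simpa using mul_nonneg hD (Real.exp_pos _).le
  · have h1 : |h (σ t.toReal ω) (Xat (σ t.toReal ω) ω)|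
        ≤ D * Real.exp (-c * (σ t.toReal ω).toReal) := hbd _ _ hσω
    refine h1.trans (mul_le_mul_of_nonneg_left (Real.exp_le_exp.mpr ?_) hD)
    have h2 : ENNReal.ofReal t.toReal ≤ σ t.toReal ω := hσ _ _ ENNReal.toReal_nonneg
    have h3 : t.toReal ≤ (σ t.toReal ω).toReal := by
      have := ENNReal.toReal_mono hσω h2
      rwa [ENNReal.toReal_ofReal ENNReal.toReal_nonneg] at this
    nlinarith

lemma nsc_contraction {E : Type*} [Fintype E] (v : Option E → ℝ)
    (M : MarkovFamily E v) (K : ℝ) (GA : GenAssumption E v M K)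
    (h : ℝ≥0∞ → Option E → ℝ) (D c : ℝ) (hD : 0 ≤ D) (hc : 0 < c)
    (hbd : ∀ t j, t ≠ ∞ → |h t j| ≤ D * Real.exp (-c * t.toReal))
    (hinf : ∀ j, h ∞ j = 0)
    (s : ℝ) (hs : 0 ≤ s) (i : E)
    (σ : CPath E → ℝ≥0∞) (hσs : ∀ ω, ENNReal.ofReal s ≤ σ ω)
    (hσγ : ∀ ω, ω s = some i → gammaJump s ω ≤ σ ω) :
    |∫ ω, h (σ ω) (Xat (σ ω) ω) ∂ M.P s (some i)|
      ≤ (1 - Real.exp (-K) * (1 - Real.exp (-c))) * (D * Real.exp (-c * s)) := by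
  set μ := M.P s (some i) with hμ
  haveI : IsProbabilityMeasure μ := M.prob s (some i)
  set a := D * Real.exp (-c * s) with ha
  set b := D * Real.exp (-c * (s + 1)) with hb
  have ha0 : 0 ≤ a := mul_nonneg hD (Real.exp_pos _).le
  have hb0 : 0 ≤ b := mul_nonneg hD (Real.exp_pos _).le
  have hba : b ≤ a := by
    refine mul_le_mul_of_nonneg_left (Real.exp_le_exp.mpr ?_) hD
    nlinarith
  set A := {ω : CPath E | gammaJump s ω ≤ ENNReal.ofReal (s + 1)} with hA
  set A' := toMeasurable μ A with hA'
  have hA'm : MeasurableSet A' := measurableSet_toMeasurable μ A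
  set G : CPath E → ℝ := fun ω => b + (a - b) * A'.indicator (fun _ => (1 : ℝ)) ω with hG
  set f : CPath E → ℝ := fun ω => h (σ ω) (Xat (σ ω) ω) with hf
  -- G is nonnegative
  have hG0 : ∀ ω, 0 ≤ G ω := by
    intro ω
    have : 0 ≤ A'.indicator (fun _ => (1 : ℝ)) ω := Set.indicator_nonneg (fun _ _ => one_pos.le) ω
    have := mul_nonneg (sub_nonneg.mpr hba) this
    simp only [hG]; linarith
  -- a.e. pointwise bound
  have hae : ∀ᵐ ω ∂μ, |f ω| ≤ G ω := by
    have hms : MeasurableSet {ω : CPath E | ω s = some i} := by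
      have : {ω : CPath E | ω s = some i} = (fun ω : CPath E => ω s) ⁻¹' {some i} := rfl
      rw [this]
      exact (measurable_pi_apply s) (show MeasurableSet {some i} from trivial)
    have hmeas1 : μ {ω : CPath E | ω s = some i} = 1 := M.init s (some i) hs
    have hcompl : μ {ω : CPath E | ω s = some i}ᶜ = 0 := by
      rw [measure_compl hms (by simp [hmeas1]), hmeas1, measure_univ]
      simp
    have hae0 : ∀ᵐ ω ∂μ, ω s = some i := by
      rw [Filter.eventually_iff, mem_ae_iff]
      simpa using hcompl
    filter_upwards [hae0] with ω hω
    by_cases hsig : σ ω = ∞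
    · have : f ω = 0 := by simp only [hf, hsig]; exact hinf _
      rw [this]
      simpa using hG0 ω
    · have h1 : |f ω| ≤ D * Real.exp (-c * (σ ω).toReal) := hbd _ _ hsig
      by_cases hmem : ω ∈ A'
      · have hGa : G ω = a := by simp only [hG, Set.indicator_of_mem hmem]; ring
        rw [hGa]
        refine h1.trans (mul_le_mul_of_nonneg_left (Real.exp_le_exp.mpr ?_) hD)
        have h2 : s ≤ (σ ω).toReal := by
          have := ENNReal.toReal_mono hsig (hσs ω)
          rwa [ENNReal.toReal_ofReal hs] at this
        nlinarith
      · have hGb : G ω = b := by simp [hG, Set.indicator_of_notMem hmem]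
        rw [hGb]
        have hnA : ω ∉ A := fun hx => hmem (subset_toMeasurable μ A hx)
        have hγ : ENNReal.ofReal (s + 1) < gammaJump s ω := not_le.mp hnA
        have hσ1 : ENNReal.ofReal (s + 1) ≤ σ ω := (hγ.trans_le (hσγ ω hω)).le
        have h2 : s + 1 ≤ (σ ω).toReal := by
          have := ENNReal.toReal_mono hsig hσ1
          rwa [ENNReal.toReal_ofReal (by linarith)] at this
        refine h1.trans (mul_le_mul_of_nonneg_left (Real.exp_le_exp.mpr ?_) hD)
        nlinarith
  -- G is integrable
  have hGi : Integrable G μ := by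
    refine (integrable_const b).add (Integrable.const_mul ?_ (a - b))
    exact (integrable_const (1 : ℝ)).indicator hA'm
  -- |∫ f| ≤ ∫ G
  have hstep1 : |∫ ω, f ω ∂μ| ≤ ∫ ω, G ω ∂μ := by
    by_cases hfi : Integrable f μ
    · calc |∫ ω, f ω ∂μ| ≤ ∫ ω, |f ω| ∂μ := by
            simpa [Real.norm_eq_abs] using norm_integral_le_integral_norm (μ := μ) f
        _ ≤ ∫ ω, G ω ∂μ := integral_mono_ae hfi.abs hGi hae
    · rw [integral_undef hfi]
      simpa using integral_nonneg hG0
  -- compute ∫ G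
  have hstep2 : ∫ ω, G ω ∂μ = b + (a - b) * (μ A).toReal := by
    rw [hG, integral_add (integrable_const b)
      (((integrable_const (1 : ℝ)).indicator hA'm).const_mul (a - b)),
      integral_const, integral_const_mul, integral_indicator_const _ hA'm,
      measureReal_def, measureReal_def, measure_toMeasurable]
    simp
  -- bound on the jump probability
  have hjump : (μ A).toReal ≤ 1 - Real.exp (-K) := by
    have hlaw := GA.jumpLaw s (s + 1) i hs (by linarith)
    rw [hμ]
    rw [hA]
    rw [hlaw]
    have hint : -K ≤ ∫ u in s..(s + 1), GA.Lam u i i := by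
      have := intervalIntegral.norm_integral_le_of_norm_le_const
        (C := K) (f := fun u => GA.Lam u i i) (a := s) (b := s + 1)
        (fun x _ => by simpa [Real.norm_eq_abs] using GA.bdd x i i)
      rw [Real.norm_eq_abs] at this
      have habs : |∫ u in s..(s + 1), GA.Lam u i i| ≤ K := by
        simpa using this
      linarith [abs_le.mp habs]
    have := Real.exp_le_exp.mpr hint
    linarith
  -- final algebra
  have hfinal : b + (a - b) * (μ A).toReal
      ≤ (1 - Real.exp (-K) * (1 - Real.exp (-c))) * a := by
    have h1 : b + (a - b) * (μ A).toReal ≤ b + (a - b) * (1 - Real.exp (-K)) :=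
      by have := mul_le_mul_of_nonneg_left hjump (sub_nonneg.mpr hba); linarith
    have hbe : b = a * Real.exp (-c) := by
      rw [hb, ha, show -c * (s + 1) = -c * s + -c by ring, Real.exp_add]
      ring
    have h2 : b + (a - b) * (1 - Real.exp (-K))
        = (1 - Real.exp (-K) * (1 - Real.exp (-c))) * a := by
      rw [hbe]; ring
    linarith
  calc |∫ ω, f ω ∂μ| ≤ ∫ ω, G ω ∂μ := hstep1
    _ = b + (a - b) * (μ A).toReal := hstep2
    _ ≤ (1 - Real.exp (-K) * (1 - Real.exp (-c))) * a := hfinal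

lemma nsc_iter_bound_plus {E : Type*} [Fintype E] (v : Option E → ℝ)
    (M : MarkovFamily E v) (K : ℝ) (GA : GenAssumption E v M K)
    (ℓ : ℝ) (g : ℝ≥0∞ → Option E → ℝ) (C c : ℝ) (hC : 0 ≤ C) (hc : 0 < c)
    (hρ0 : 0 ≤ 1 - Real.exp (-K) * (1 - Real.exp (-c)))
    (hg0 : ∀ j, g ∞ j = 0)
    (hgd : ∀ (t : ℝ≥0∞) (j : Option E), t ≠ ∞ → |g t j| ≤ C * Real.exp (-c * t.toReal)) :
    ∀ k : ℕ, (∀ j, (opAplus M.P v ℓ)^[k] g ∞ j = 0) ∧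
      (∀ (t : ℝ≥0∞) (j : Option E), t ≠ ∞ → |(opAplus M.P v ℓ)^[k] g t j|
        ≤ C * (1 - Real.exp (-K) * (1 - Real.exp (-c))) ^ k * Real.exp (-c * t.toReal)) := by
  set ρ := 1 - Real.exp (-K) * (1 - Real.exp (-c)) with hρ
  intro k
  induction k with
  | zero => exact ⟨hg0, by simpa using hgd⟩
  | succ k ih =>
    obtain ⟨hz, hb⟩ := ih
    set h := (opAplus M.P v ℓ)^[k] g with hh
    set D := C * ρ ^ k with hD
    have hDnn : 0 ≤ D := mul_nonneg hC (pow_nonneg hρ0 k)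
    -- opP
    have hz3 : ∀ j, opP M.P v ℓ h ∞ j = 0 := fun j => nsc_restrP_inf v _ j
    have hb3 : ∀ (t : ℝ≥0∞) (j : Option E), t ≠ ∞ →
        |opP M.P v ℓ h t j| ≤ D * Real.exp (-c * t.toReal) := by
      intro t j ht
      refine nsc_restrP_bound v _ t j _ (mul_nonneg hDnn (Real.exp_pos _).le) ?_
      intro e _ ht'
      exact nsc_applyAt_bound M.P M.prob _ (fun s ω _ => nsc_tauP_ge v s ℓ ω)
        h D c hDnn hc.le hb hz t (some e) ht'
    -- opJP
    have hz2 : ∀ j, opJP M.P v (opP M.P v ℓ h) ∞ j = 0 := fun j => nsc_restrM_inf v _ j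
    have hb2 : ∀ (t : ℝ≥0∞) (j : Option E), t ≠ ∞ →
        |opJP M.P v (opP M.P v ℓ h) t j| ≤ D * Real.exp (-c * t.toReal) := by
      intro t j ht
      refine nsc_restrM_bound v _ t j _ (mul_nonneg hDnn (Real.exp_pos _).le) ?_
      intro e _ ht'
      exact nsc_applyAt_bound M.P M.prob _ (fun s ω _ => nsc_tauP_ge v s 0 ω)
        _ D c hDnn hc.le hb3 hz3 t (some e) ht'
    -- opM
    have hz1 : ∀ j, opM M.P v ℓ (opJP M.P v (opP M.P v ℓ h)) ∞ j = 0 :=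
      fun j => nsc_restrM_inf v _ j
    have hb1 : ∀ (t : ℝ≥0∞) (j : Option E), t ≠ ∞ →
        |opM M.P v ℓ (opJP M.P v (opP M.P v ℓ h)) t j| ≤ D * Real.exp (-c * t.toReal) := by
      intro t j ht
      refine nsc_restrM_bound v _ t j _ (mul_nonneg hDnn (Real.exp_pos _).le) ?_
      intro e _ ht'
      exact nsc_applyAt_bound M.P M.prob _ (fun s ω _ => nsc_tauM_ge v s ℓ ω)
        _ D c hDnn hc.le hb2 hz2 t (some e) ht'
    -- opJM with contraction
    have hiter : (opAplus M.P v ℓ)^[k + 1] g = opAplus M.P v ℓ h := by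
      rw [Function.iterate_succ_apply']
    constructor
    · intro j
      rw [hiter]
      exact nsc_restrP_inf v _ j
    · intro t j ht
      rw [hiter]
      show |restrP v (applyAt M.P (fun s => tauM v s 0)
        (opM M.P v ℓ (opJP M.P v (opP M.P v ℓ h)))) t j| ≤ _
      refine nsc_restrP_bound v _ t j _
        (mul_nonneg (mul_nonneg hC (pow_nonneg hρ0 _)) (Real.exp_pos _).le) ?_
      intro e hve ht'
      have hval : applyAt M.P (fun s => tauM v s 0)
          (opM M.P v ℓ (opJP M.P v (opP M.P v ℓ h))) t (some e)
          = ∫ ω, (opM M.P v ℓ (opJP M.P v (opP M.P v ℓ h)))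
              (tauM v t.toReal 0 ω) (Xat (tauM v t.toReal 0 ω) ω) ∂ M.P t.toReal (some e) := by
        unfold applyAt
        rw [if_neg ht']
      rw [hval]
      have hcontr := nsc_contraction v M K GA _ D c hDnn hc hb1 hz1 t.toReal
        ENNReal.toReal_nonneg e (tauM v t.toReal 0) (fun ω => nsc_tauM_ge v t.toReal 0 ω)
        (fun ω hω => nsc_gamma_le_tauM v t.toReal e hve.le ω hω)
      refine hcontr.trans (le_of_eq ?_)
      rw [hD, pow_succ]
      ring

lemma nsc_iter_bound_minus {E : Type*} [Fintype E] (v : Option E → ℝ)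
    (M : MarkovFamily E v) (K : ℝ) (GA : GenAssumption E v M K)
    (ℓ : ℝ) (g : ℝ≥0∞ → Option E → ℝ) (C c : ℝ) (hC : 0 ≤ C) (hc : 0 < c)
    (hρ0 : 0 ≤ 1 - Real.exp (-K) * (1 - Real.exp (-c)))
    (hg0 : ∀ j, g ∞ j = 0)
    (hgd : ∀ (t : ℝ≥0∞) (j : Option E), t ≠ ∞ → |g t j| ≤ C * Real.exp (-c * t.toReal)) :
    ∀ k : ℕ, (∀ j, (opAminus M.P v ℓ)^[k] g ∞ j = 0) ∧
      (∀ (t : ℝ≥0∞) (j : Option E), t ≠ ∞ → |(opAminus M.P v ℓ)^[k] g t j|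
        ≤ C * (1 - Real.exp (-K) * (1 - Real.exp (-c))) ^ k * Real.exp (-c * t.toReal)) := by
  set ρ := 1 - Real.exp (-K) * (1 - Real.exp (-c)) with hρ
  intro k
  induction k with
  | zero => exact ⟨hg0, by simpa using hgd⟩
  | succ k ih =>
    obtain ⟨hz, hb⟩ := ih
    set h := (opAminus M.P v ℓ)^[k] g with hh
    set D := C * ρ ^ k with hD
    have hDnn : 0 ≤ D := mul_nonneg hC (pow_nonneg hρ0 k)
    -- opM
    have hz1 : ∀ j, opM M.P v ℓ h ∞ j = 0 := fun j => nsc_restrM_inf v _ j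
    have hb1 : ∀ (t : ℝ≥0∞) (j : Option E), t ≠ ∞ →
        |opM M.P v ℓ h t j| ≤ D * Real.exp (-c * t.toReal) := by
      intro t j ht
      refine nsc_restrM_bound v _ t j _ (mul_nonneg hDnn (Real.exp_pos _).le) ?_
      intro e _ ht'
      exact nsc_applyAt_bound M.P M.prob _ (fun s ω _ => nsc_tauM_ge v s ℓ ω)
        h D c hDnn hc.le hb hz t (some e) ht'
    -- opJM
    have hz2 : ∀ j, opJM M.P v (opM M.P v ℓ h) ∞ j = 0 := fun j => nsc_restrP_inf v _ j
    have hb2 : ∀ (t : ℝ≥0∞) (j : Option E), t ≠ ∞ →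
        |opJM M.P v (opM M.P v ℓ h) t j| ≤ D * Real.exp (-c * t.toReal) := by
      intro t j ht
      refine nsc_restrP_bound v _ t j _ (mul_nonneg hDnn (Real.exp_pos _).le) ?_
      intro e _ ht'
      exact nsc_applyAt_bound M.P M.prob _ (fun s ω _ => nsc_tauM_ge v s 0 ω)
        _ D c hDnn hc.le hb1 hz1 t (some e) ht'
    -- opP
    have hz3 : ∀ j, opP M.P v ℓ (opJM M.P v (opM M.P v ℓ h)) ∞ j = 0 :=
      fun j => nsc_restrP_inf v _ j
    have hb3 : ∀ (t : ℝ≥0∞) (j : Option E), t ≠ ∞ →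
        |opP M.P v ℓ (opJM M.P v (opM M.P v ℓ h)) t j| ≤ D * Real.exp (-c * t.toReal) := by
      intro t j ht
      refine nsc_restrP_bound v _ t j _ (mul_nonneg hDnn (Real.exp_pos _).le) ?_
      intro e _ ht'
      exact nsc_applyAt_bound M.P M.prob _ (fun s ω _ => nsc_tauP_ge v s ℓ ω)
        _ D c hDnn hc.le hb2 hz2 t (some e) ht'
    -- opJP with contraction
    have hiter : (opAminus M.P v ℓ)^[k + 1] g = opAminus M.P v ℓ h := by
      rw [Function.iterate_succ_apply']
    constructor
    · intro j
      rw [hiter]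
      exact nsc_restrM_inf v _ j
    · intro t j ht
      rw [hiter]
      show |restrM v (applyAt M.P (fun s => tauP v s 0)
        (opP M.P v ℓ (opJM M.P v (opM M.P v ℓ h)))) t j| ≤ _
      refine nsc_restrM_bound v _ t j _
        (mul_nonneg (mul_nonneg hC (pow_nonneg hρ0 _)) (Real.exp_pos _).le) ?_
      intro e hve ht'
      have hval : applyAt M.P (fun s => tauP v s 0)
          (opP M.P v ℓ (opJM M.P v (opM M.P v ℓ h))) t (some e)
          = ∫ ω, (opP M.P v ℓ (opJM M.P v (opM M.P v ℓ h)))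
              (tauP v t.toReal 0 ω) (Xat (tauP v t.toReal 0 ω) ω) ∂ M.P t.toReal (some e) := by
        unfold applyAt
        rw [if_neg ht']
      rw [hval]
      have hcontr := nsc_contraction v M K GA _ D c hDnn hc hb3 hz3 t.toReal
        ENNReal.toReal_nonneg e (tauP v t.toReal 0) (fun ω => nsc_tauP_ge v t.toReal 0 ω)
        (fun ω hω => nsc_gamma_le_tauP v t.toReal e hve.le ω hω)
      refine hcontr.trans (le_of_eq ?_)
      rw [hD, pow_succ]
      ring

lemma nsc_cauchy {ι : Type*} (u : ℕ → ι → ℝ) (C ρ : ℝ) (hC : 0 < C)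
    (hρ0 : 0 ≤ ρ) (hρ1 : ρ < 1) (hu : ∀ k x, |u k x| ≤ C * ρ ^ k)
    (ε : ℝ) (hε : 0 < ε) :
    ∃ N : ℕ, ∀ m n : ℕ, N ≤ m → N ≤ n → ∀ x : ι,
      |(∑ k ∈ Finset.Icc 1 m, u k x) - ∑ k ∈ Finset.Icc 1 n, u k x| ≤ ε := by
  have h1ρ : 0 < 1 - ρ := by linarith
  obtain ⟨N, hN⟩ := exists_pow_lt_of_lt_one (show (0:ℝ) < ε * (1 - ρ) / C by positivity) hρ1
  have key : ∀ n m : ℕ, n ≤ m → N ≤ n → ∀ x : ι,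
      |(∑ k ∈ Finset.Icc 1 m, u k x) - ∑ k ∈ Finset.Icc 1 n, u k x| ≤ ε := by
    intro n m hnm hNn x
    have hsub : Finset.Icc 1 n ⊆ Finset.Icc 1 m := Finset.Icc_subset_Icc_right hnm
    have hdiff : (∑ k ∈ Finset.Icc 1 m, u k x) - ∑ k ∈ Finset.Icc 1 n, u k x
        = ∑ k ∈ Finset.Icc 1 m \ Finset.Icc 1 n, u k x :=
      (Finset.sum_sdiff_eq_sub hsub).symm
    have hset : Finset.Icc 1 m \ Finset.Icc 1 n = Finset.Ioc n m := by
      ext k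
      simp only [Finset.mem_sdiff, Finset.mem_Icc, Finset.mem_Ioc]
      omega
    rw [hdiff, hset]
    calc |∑ k ∈ Finset.Ioc n m, u k x| ≤ ∑ k ∈ Finset.Ioc n m, |u k x| :=
          Finset.abs_sum_le_sum_abs _ _
      _ ≤ ∑ k ∈ Finset.Ioc n m, C * ρ ^ k := Finset.sum_le_sum fun k _ => hu k x
      _ = C * ∑ k ∈ Finset.Ioc n m, ρ ^ k := by rw [Finset.mul_sum]
      _ ≤ ε := by
          have heq : Finset.Ioc n m = Finset.Ico (n + 1) (m + 1) := by
            ext k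
            simp only [Finset.mem_Ioc, Finset.mem_Ico]
            omega
          rw [heq, geom_sum_Ico (ne_of_lt hρ1) (by omega)]
          have hpow : ρ ^ (n + 1) ≤ ρ ^ N :=
            pow_le_pow_of_le_one hρ0 hρ1.le (by omega)
          have hm0 : (0:ℝ) ≤ ρ ^ (m + 1) := pow_nonneg hρ0 _
          have hNC : ρ ^ N * C < ε * (1 - ρ) := (lt_div_iff₀ hC).mp hN
          rw [show (ρ ^ (m + 1) - ρ ^ (n + 1)) / (ρ - 1)
              = (ρ ^ (n + 1) - ρ ^ (m + 1)) / (1 - ρ) by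
            rw [div_eq_div_iff (by linarith) (by linarith)]; ring]
          rw [mul_div_assoc', div_le_iff₀ h1ρ]
          nlinarith
  refine ⟨N, fun m n hm hn x => ?_⟩
  rcases le_total n m with hnm | hmn
  · exact key n m hnm hn x
  · rw [abs_sub_comm]
    exact key m n hmn hm x

end NeumannAux

/-- (Lemma 3.1: Neumann-series convergence.) If `g⁺ ∈ B_b(X̄₊)` decays
exponentially fast to zero, then `∑_{n=1}^∞ (J⁻ 𝒫⁻_{ℓ⁻+ℓ⁺} J⁺ 𝒫⁺_{ℓ⁻+ℓ⁺})ⁿ g⁺` converges in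
supremum norm (the partial sums are uniformly Cauchy), and analogously for
`g⁻ ∈ B_b(X̄₋)` and `∑_{n=1}^∞ (J⁺ 𝒫⁺_{ℓ⁻+ℓ⁺} J⁻ 𝒫⁻_{ℓ⁻+ℓ⁺})ⁿ g⁻`. -/
theorem neumann_series_sup_norm_convergence
    {E : Type*} [Fintype E] (hcard : 1 < Fintype.card E) (v : Option E → ℝ)
    (hv : ∀ e : E, v (some e) ≠ 0) (hv0 : v none = 0)
    (hEp : ∃ e : E, 0 < v (some e)) (hEm : ∃ e : E, v (some e) < 0)
    (M : MarkovFamily E v) (K : ℝ) (GA : GenAssumption E v M K)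
    (ℓm ℓp : ℝ) (hℓm : 0 ≤ ℓm) (hℓp : 0 ≤ ℓp) :
    (∀ g : ℝ≥0∞ → Option E → ℝ, MemBbP v g → DecaysExp g →
      ∀ ε : ℝ, 0 < ε → ∃ N : ℕ, ∀ m n : ℕ, N ≤ m → N ≤ n →
        ∀ (t : ℝ≥0∞) (j : Option E),
          |(∑ k ∈ Finset.Icc 1 m, ((opAplus M.P v (ℓm + ℓp))^[k] g) t j)
            - ∑ k ∈ Finset.Icc 1 n, ((opAplus M.P v (ℓm + ℓp))^[k] g) t j| ≤ ε) ∧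
    (∀ g : ℝ≥0∞ → Option E → ℝ, MemBbM v g → DecaysExp g →
      ∀ ε : ℝ, 0 < ε → ∃ N : ℕ, ∀ m n : ℕ, N ≤ m → N ≤ n →
        ∀ (t : ℝ≥0∞) (j : Option E),
          |(∑ k ∈ Finset.Icc 1 m, ((opAminus M.P v (ℓm + ℓp))^[k] g) t j)
            - ∑ k ∈ Finset.Icc 1 n, ((opAminus M.P v (ℓm + ℓp))^[k] g) t j| ≤ ε) := by
  have hρfacts : ∀ c : ℝ, 0 < c →
      0 ≤ 1 - Real.exp (-K) * (1 - Real.exp (-c)) ∧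
      1 - Real.exp (-K) * (1 - Real.exp (-c)) < 1 := by
    intro c hc
    have he1 : Real.exp (-c) < 1 := by
      have := Real.exp_lt_exp.mpr (show -c < (0:ℝ) by linarith)
      rwa [Real.exp_zero] at this
    have he2 : Real.exp (-K) < 1 := by
      have := Real.exp_lt_exp.mpr (show -K < (0:ℝ) by linarith [GA.hK])
      rwa [Real.exp_zero] at this
    have he3 := Real.exp_pos (-c)
    have he4 := Real.exp_pos (-K)
    constructor
    · nlinarith
    · nlinarith
  constructor
  · intro g hg hdec ε hε
    obtain ⟨C, c, hC, hc, hgd⟩ := hdec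
    obtain ⟨hρ0, hρ1⟩ := hρfacts c hc
    have hg0 : ∀ j, g ∞ j = 0 := by
      intro j
      cases j with
      | none => exact hg.2.2.1 ∞
      | some e => exact hg.2.2.2 ∞ e (by simp)
    have hgd' : ∀ (t : ℝ≥0∞) (j : Option E), t ≠ ∞ →
        |g t j| ≤ C * Real.exp (-c * t.toReal) := fun t j ht => hgd t j ht
    have hiter := nsc_iter_bound_plus v M K GA (ℓm + ℓp) g C c hC.le hc hρ0 hg0 hgd'
    have hu : ∀ (k : ℕ) (x : ℝ≥0∞ × Option E),
        |(opAplus M.P v (ℓm + ℓp))^[k] g x.1 x.2|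
          ≤ C * (1 - Real.exp (-K) * (1 - Real.exp (-c))) ^ k := by
      intro k x
      by_cases hx : x.1 = ∞
      · rw [hx, (hiter k).1 x.2]
        simpa using mul_nonneg hC.le (pow_nonneg hρ0 k)
      · refine ((hiter k).2 x.1 x.2 hx).trans ?_
        have hexp : Real.exp (-c * x.1.toReal) ≤ 1 := by
          rw [show (1:ℝ) = Real.exp 0 by rw [Real.exp_zero]]
          exact Real.exp_le_exp.mpr
            (mul_nonpos_of_nonpos_of_nonneg (by linarith) ENNReal.toReal_nonneg)
        nlinarith [mul_nonneg hC.le (pow_nonneg hρ0 k)]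
    obtain ⟨N, hN⟩ := nsc_cauchy (ι := ℝ≥0∞ × Option E)
      (fun k x => (opAplus M.P v (ℓm + ℓp))^[k] g x.1 x.2) C
      (1 - Real.exp (-K) * (1 - Real.exp (-c))) hC hρ0 hρ1 hu ε hε
    exact ⟨N, fun m n hm hn t j => hN m n hm hn (t, j)⟩
  · intro g hg hdec ε hε
    obtain ⟨C, c, hC, hc, hgd⟩ := hdec
    obtain ⟨hρ0, hρ1⟩ := hρfacts c hc
    have hg0 : ∀ j, g ∞ j = 0 := by
      intro j
      cases j with
      | none => exact hg.2.2.1 ∞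
      | some e => exact hg.2.2.2 ∞ e (by simp)
    have hgd' : ∀ (t : ℝ≥0∞) (j : Option E), t ≠ ∞ →
        |g t j| ≤ C * Real.exp (-c * t.toReal) := fun t j ht => hgd t j ht
    have hiter := nsc_iter_bound_minus v M K GA (ℓm + ℓp) g C c hC.le hc hρ0 hg0 hgd'
    have hu : ∀ (k : ℕ) (x : ℝ≥0∞ × Option E),
        |(opAminus M.P v (ℓm + ℓp))^[k] g x.1 x.2|
          ≤ C * (1 - Real.exp (-K) * (1 - Real.exp (-c))) ^ k := by
      intro k x
      by_cases hx : x.1 = ∞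
      · rw [hx, (hiter k).1 x.2]
        simpa using mul_nonneg hC.le (pow_nonneg hρ0 k)
      · refine ((hiter k).2 x.1 x.2 hx).trans ?_
        have hexp : Real.exp (-c * x.1.toReal) ≤ 1 := by
          rw [show (1:ℝ) = Real.exp 0 by rw [Real.exp_zero]]
          exact Real.exp_le_exp.mpr
            (mul_nonpos_of_nonpos_of_nonneg (by linarith) ENNReal.toReal_nonneg)
        nlinarith [mul_nonneg hC.le (pow_nonneg hρ0 k)]
    obtain ⟨N, hN⟩ := nsc_cauchy (ι := ℝ≥0∞ × Option E)
      (fun k x => (opAminus M.P v (ℓm + ℓp))^[k] g x.1 x.2) C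
      (1 - Real.exp (-K) * (1 - Real.exp (-c))) hC hρ0 hρ1 hu ε hε
    exact ⟨N, fun m n hm hn t j => hN m n hm hn (t, j)⟩
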